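/- Let Ξ, Θ and Υ be finite alphabets. Suppose R ⊆ Ξ* × Θ* and S ⊆ Θ* × Υ* are each recognised by nondeterministic finite automata with finitely many states (over Ξ ⊕ Θ and Θ ⊕ Υ respectively, in the interleaving sense). Then the composite relation R ; S := {(s, u) ∈ Ξ* × Υ* | ∃ t ∈ Θ*, R(s,t) ∧ S(t,u)} is recognised by a nondeterministic finite automaton with finitely many states over Ξ ⊕ Υ. -/

import Mathlib

/-- An NFA over `Ξ ⊕ Θ` recognises a relation `R ⊆ Ξ* × Θ*` if `R s t` holds exactly
when the NFA accepts some interleaving of `s` (as left letters) and `t` (as right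
letters). -/
def Recognises {α β Q : Type} (A : NFA (α ⊕ β) Q) (R : List α → List β → Prop) : Prop :=
  ∀ (s : List α) (t : List β),
    R s t ↔ ∃ w ∈ A.accepts, w.filterMap Sum.getLeft? = s ∧ w.filterMap Sum.getRight? = t

namespace Stmt13

variable {α Q : Type}

/-- A run of a nondeterministic transition system. -/
inductive Run (step : Q → α → Set Q) : Q → List α → Q → Prop
  | nil (q : Q) : Run step q [] q
  | cons {q q' q'' : Q} {a : α} {w : List α} :
      q' ∈ step q a → Run step q' w q'' → Run step q (a :: w) q''

theorem Run.append {step : Q → α → Set Q} {q q' q'' : Q} {w w' : List α}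
    (h : Run step q w q') (h' : Run step q' w' q'') : Run step q (w ++ w') q'' := by
  induction h with
  | nil => exact h'
  | cons hs _ ih => exact Run.cons hs (ih h')

theorem mem_evalFrom (A : NFA α Q) :
    ∀ (w : List α) (S : Set Q) (q' : Q),
      q' ∈ A.evalFrom S w ↔ ∃ q ∈ S, Run A.step q w q' := by
  intro w
  induction w with
  | nil =>
    intro S q'
    simp only [NFA.evalFrom_nil]
    constructor
    · intro h; exact ⟨q', h, Run.nil q'⟩
    · rintro ⟨q, hq, hr⟩; cases hr; exact hq
  | cons a w ih =>
    intro S q'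
    have : A.evalFrom S (a :: w) = A.evalFrom (A.stepSet S a) w := rfl
    rw [this, ih]
    constructor
    · rintro ⟨q1, hq1, hr⟩
      rw [NFA.mem_stepSet] at hq1
      obtain ⟨q, hq, hstep⟩ := hq1
      exact ⟨q, hq, Run.cons hstep hr⟩
    · rintro ⟨q, hq, hr⟩
      cases hr with
      | cons hstep hr' =>
        exact ⟨_, NFA.mem_stepSet.2 ⟨q, hq, hstep⟩, hr'⟩

theorem mem_accepts_run (A : NFA α Q) (w : List α) :
    w ∈ A.accepts ↔ ∃ q0 ∈ A.start, ∃ q ∈ A.accept, Run A.step q0 w q := by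
  rw [NFA.mem_accepts]
  constructor
  · rintro ⟨q, hq, hev⟩
    rw [mem_evalFrom] at hev
    obtain ⟨q0, hq0, hr⟩ := hev
    exact ⟨q0, hq0, q, hq, hr⟩
  · rintro ⟨q0, hq0, q, hq, hr⟩
    exact ⟨q, hq, (mem_evalFrom A w A.start q).2 ⟨q0, hq0, hr⟩⟩

/-- Transport an NFA along an equivalence of state spaces. -/
theorem exists_nfa_fin {α Q : Type} [Fintype Q] (A : NFA α Q) :
    ∃ (n : ℕ) (A' : NFA α (Fin n)), A'.accepts = A.accepts := by
  classical
  let e := Fintype.equivFin Q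
  refine ⟨Fintype.card Q,
    ⟨fun q a => {q' | e.symm q' ∈ A.step (e.symm q) a}, e.symm ⁻¹' A.start,
      e.symm ⁻¹' A.accept⟩, ?_⟩
  set A' : NFA α (Fin (Fintype.card Q)) :=
    ⟨fun q a => {q' | e.symm q' ∈ A.step (e.symm q) a}, e.symm ⁻¹' A.start,
      e.symm ⁻¹' A.accept⟩ with hA'
  have fwd : ∀ {q w q'}, Run A'.step q w q' → Run A.step (e.symm q) w (e.symm q') := by
    intro q w q' h
    induction h with
    | nil => exact Run.nil _
    | cons hs _ ih => exact Run.cons hs ih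
  have bwd : ∀ {p w p'}, Run A.step p w p' → Run A'.step (e p) w (e p') := by
    intro p w p' h
    induction h with
    | nil => exact Run.nil _
    | cons hs _ ih =>
      refine Run.cons ?_ ih
      show e.symm (e _) ∈ A.step (e.symm (e _)) _
      simpa using hs
  ext w
  rw [mem_accepts_run, mem_accepts_run]
  constructor
  · rintro ⟨q0, hq0, q, hq, hr⟩
    exact ⟨e.symm q0, hq0, e.symm q, hq, fwd hr⟩
  · rintro ⟨p0, hp0, p, hp, hr⟩
    refine ⟨e p0, by show e.symm (e p0) ∈ A.start; simpa using hp0, e p, by show e.symm (e p) ∈ A.accept; simpa using hp, bwd hr⟩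

section Comp

variable {Ξ Θ Υ P Q : Type} (A : NFA (Ξ ⊕ Θ) P) (B : NFA (Θ ⊕ Υ) Q)

/-- A silent (ε) move of the product construction: both automata take a step on the
same middle letter. -/
def Eps (r r' : P × Q) : Prop :=
  ∃ t : Θ, r'.1 ∈ A.step r.1 (Sum.inr t) ∧ r'.2 ∈ B.step r.2 (Sum.inl t)

/-- The ε-closure relation. -/
def E : P × Q → P × Q → Prop := Relation.ReflTransGen (Eps A B)

/-- The step function of the composite automaton: first any number of silent moves,
then a genuine letter read by one of the two components. -/
def Cstep (r : P × Q) (a : Ξ ⊕ Υ) : Set (P × Q) :=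
  {r'' | ∃ r', E A B r r' ∧
    Sum.elim (fun x => r''.1 ∈ A.step r'.1 (Sum.inl x) ∧ r''.2 = r'.2)
             (fun y => r''.2 ∈ B.step r'.2 (Sum.inr y) ∧ r''.1 = r'.1) a}

/-- The composite automaton. -/
def Comp : NFA (Ξ ⊕ Υ) (P × Q) where
  step := Cstep A B
  start := {r | r.1 ∈ A.start ∧ r.2 ∈ B.start}
  accept := {r | ∃ r', E A B r r' ∧ r'.1 ∈ A.accept ∧ r'.2 ∈ B.accept}

/-- A run of the composite automaton followed by silent moves. -/
def CRun (r : P × Q) (w : List (Ξ ⊕ Υ)) (r'' : P × Q) : Prop :=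
  ∃ r', Run (Cstep A B) r w r' ∧ E A B r' r''

theorem CRun.absorb {r0 r r'' : P × Q} {w : List (Ξ ⊕ Υ)}
    (h : E A B r0 r) (h' : CRun A B r w r'') : CRun A B r0 w r'' := by
  obtain ⟨r1, hrun, he⟩ := h'
  cases hrun with
  | nil => exact ⟨r0, Run.nil r0, h.trans he⟩
  | cons hs hrest =>
    obtain ⟨rm, hE, hstep⟩ := hs
    exact ⟨r1, Run.cons ⟨rm, h.trans hE, hstep⟩ hrest, he⟩

theorem fwd : ∀ (w1 : List (Ξ ⊕ Θ)) (w2 : List (Θ ⊕ Υ)) (p0 p1 : P) (q0 q1 : Q),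
    Run A.step p0 w1 p1 → Run B.step q0 w2 q1 →
    w1.filterMap Sum.getRight? = w2.filterMap Sum.getLeft? →
    ∃ w : List (Ξ ⊕ Υ), CRun A B (p0, q0) w (p1, q1) ∧
      w.filterMap Sum.getLeft? = w1.filterMap Sum.getLeft? ∧
      w.filterMap Sum.getRight? = w2.filterMap Sum.getRight? := by
  intro w1
  induction w1 with
  | nil =>
    intro w2
    induction w2 with
    | nil =>
      intro p0 p1 q0 q1 h1 h2 _
      cases h1; cases h2
      exact ⟨[], ⟨(p0, q0), Run.nil _, Relation.ReflTransGen.refl⟩, rfl, rfl⟩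
    | cons b w2' ih2 =>
      intro p0 p1 q0 q1 h1 h2 hproj
      cases b with
      | inl t' => simp [List.filterMap_cons] at hproj
      | inr y =>
        cases h2 with
        | @cons _ qm _ _ _ hs hrest =>
          obtain ⟨w, hc, hL, hR⟩ := ih2 p0 p1 qm q1 h1 hrest (by simpa [List.filterMap_cons] using hproj)
          refine ⟨Sum.inr y :: w, ?_, by simpa [List.filterMap_cons] using hL,
            by simpa [List.filterMap_cons] using hR⟩
          obtain ⟨rf, hrun, he⟩ := hc
          exact ⟨rf, Run.cons (q' := (p0, qm)) ⟨(p0, q0), Relation.ReflTransGen.refl, hs, rfl⟩ hrun, he⟩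
  | cons a w1' ih1 =>
    intro w2
    induction w2 with
    | nil =>
      intro p0 p1 q0 q1 h1 h2 hproj
      cases a with
      | inl x =>
        cases h1 with
        | @cons _ pm _ _ _ hs hrest =>
          obtain ⟨w, hc, hL, hR⟩ := ih1 [] pm p1 q0 q1 hrest h2 (by simpa [List.filterMap_cons] using hproj)
          refine ⟨Sum.inl x :: w, ?_, by simpa [List.filterMap_cons] using hL,
            by simpa [List.filterMap_cons] using hR⟩
          obtain ⟨rf, hrun, he⟩ := hc
          exact ⟨rf, Run.cons (q' := (pm, q0)) ⟨(p0, q0), Relation.ReflTransGen.refl, hs, rfl⟩ hrun, he⟩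
      | inr t0 => simp [List.filterMap_cons] at hproj
    | cons b w2' ih2 =>
      intro p0 p1 q0 q1 h1 h2 hproj
      cases a with
      | inl x =>
        cases h1 with
        | @cons _ pm _ _ _ hs hrest =>
          obtain ⟨w, hc, hL, hR⟩ := ih1 (b :: w2') pm p1 q0 q1 hrest h2 (by simpa [List.filterMap_cons] using hproj)
          refine ⟨Sum.inl x :: w, ?_, by simpa [List.filterMap_cons] using hL, hR⟩
          obtain ⟨rf, hrun, he⟩ := hc
          exact ⟨rf, Run.cons (q' := (pm, q0)) ⟨(p0, q0), Relation.ReflTransGen.refl, hs, rfl⟩ hrun, he⟩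
      | inr t0 =>
        cases b with
        | inr y =>
          cases h2 with
          | @cons _ qm _ _ _ hs hrest =>
            obtain ⟨w, hc, hL, hR⟩ := ih2 p0 p1 qm q1 h1 hrest (by simpa [List.filterMap_cons] using hproj)
            refine ⟨Sum.inr y :: w, ?_, hL, by simpa [List.filterMap_cons] using hR⟩
            obtain ⟨rf, hrun, he⟩ := hc
            exact ⟨rf, Run.cons (q' := (p0, qm)) ⟨(p0, q0), Relation.ReflTransGen.refl, hs, rfl⟩ hrun, he⟩
        | inl t' =>
          simp only [List.filterMap_cons, Sum.getRight?, Sum.getLeft?] at hproj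
          obtain ⟨rfl, hproj'⟩ : t0 = t' ∧ w1'.filterMap Sum.getRight? = w2'.filterMap Sum.getLeft? := by
            simpa using hproj
          cases h1 with
          | cons hs1 hrest1 =>
            cases h2 with
            | cons hs2 hrest2 =>
              obtain ⟨w, hc, hL, hR⟩ := ih1 w2' _ p1 _ q1 hrest1 hrest2 hproj'
              refine ⟨w, ?_, by simpa [List.filterMap_cons] using hL,
                by simpa [List.filterMap_cons] using hR⟩
              exact CRun.absorb A B (Relation.ReflTransGen.single ⟨t0, hs1, hs2⟩) hc

theorem eps_decomp {r r' : P × Q} (h : E A B r r') :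
    ∃ (w1 : List (Ξ ⊕ Θ)) (w2 : List (Θ ⊕ Υ)),
      Run A.step r.1 w1 r'.1 ∧ Run B.step r.2 w2 r'.2 ∧
      w1.filterMap Sum.getLeft? = [] ∧
      w1.filterMap Sum.getRight? = w2.filterMap Sum.getLeft? ∧
      w2.filterMap Sum.getRight? = [] := by
  induction h with
  | refl => exact ⟨[], [], Run.nil _, Run.nil _, rfl, rfl, rfl⟩
  | tail _ hstep ih =>
    obtain ⟨w1, w2, hr1, hr2, hL, hM, hR⟩ := ih
    obtain ⟨t, h1, h2⟩ := hstep
    exact ⟨w1 ++ [Sum.inr t], w2 ++ [Sum.inl t],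
      hr1.append (Run.cons h1 (Run.nil _)), hr2.append (Run.cons h2 (Run.nil _)),
      by simp [List.filterMap_append, hL], by simp [List.filterMap_append, hM],
      by simp [List.filterMap_append, hR]⟩

theorem bwd {r r' : P × Q} {w : List (Ξ ⊕ Υ)} (h : Run (Cstep A B) r w r') :
    ∃ (w1 : List (Ξ ⊕ Θ)) (w2 : List (Θ ⊕ Υ)),
      Run A.step r.1 w1 r'.1 ∧ Run B.step r.2 w2 r'.2 ∧
      w1.filterMap Sum.getLeft? = w.filterMap Sum.getLeft? ∧
      w1.filterMap Sum.getRight? = w2.filterMap Sum.getLeft? ∧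
      w2.filterMap Sum.getRight? = w.filterMap Sum.getRight? := by
  induction h with
  | nil => exact ⟨[], [], Run.nil _, Run.nil _, rfl, rfl, rfl⟩
  | @cons q q' q'' a w hs _ ih =>
    obtain ⟨rm, hE, hstep⟩ := hs
    obtain ⟨e1, e2, he1, he2, hL0, hM0, hR0⟩ := eps_decomp A B hE
    obtain ⟨w1, w2, h1, h2, hL, hM, hR⟩ := ih
    cases a with
    | inl x =>
      obtain ⟨hsx, hq2⟩ := hstep
      refine ⟨e1 ++ (Sum.inl x :: w1), e2 ++ w2, ?_, ?_, ?_, ?_, ?_⟩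
      · exact he1.append (Run.cons hsx h1)
      · refine he2.append ?_
        rw [← hq2] at *
        exact h2
      · simp [List.filterMap_append, List.filterMap_cons, hL0, hL]
      · simp [List.filterMap_append, List.filterMap_cons, hM0, hM]
      · simp [List.filterMap_append, List.filterMap_cons, hR0, hR]
    | inr y =>
      obtain ⟨hsy, hq1⟩ := hstep
      refine ⟨e1 ++ w1, e2 ++ (Sum.inr y :: w2), ?_, ?_, ?_, ?_, ?_⟩
      · refine he1.append ?_
        rw [← hq1] at *
        exact h1
      · exact he2.append (Run.cons hsy h2)
      · simp [List.filterMap_append, List.filterMap_cons, hL0, hL]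
      · simp [List.filterMap_append, List.filterMap_cons, hM0, hM]
      · simp [List.filterMap_append, List.filterMap_cons, hR0, hR]

theorem comp_recognises {R : List Ξ → List Θ → Prop} {S : List Θ → List Υ → Prop}
    (hA : Recognises A R) (hB : Recognises B S) :
    Recognises (Comp A B) (fun s u => ∃ t : List Θ, R s t ∧ S t u) := by
  intro s u
  constructor
  · rintro ⟨t, hr, hs⟩
    obtain ⟨w1, hw1acc, hw1L, hw1R⟩ := (hA s t).1 hr
    obtain ⟨w2, hw2acc, hw2L, hw2R⟩ := (hB t u).1 hs
    rw [mem_accepts_run] at hw1acc hw2acc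
    obtain ⟨p0, hp0, p1, hp1, hrun1⟩ := hw1acc
    obtain ⟨q0, hq0, q1, hq1, hrun2⟩ := hw2acc
    obtain ⟨w, ⟨rmid, hrun, hE⟩, hL, hR⟩ :=
      fwd A B w1 w2 p0 p1 q0 q1 hrun1 hrun2 (hw1R.trans hw2L.symm)
    refine ⟨w, ?_, hL.trans hw1L, hR.trans hw2R⟩
    rw [mem_accepts_run]
    exact ⟨(p0, q0), ⟨hp0, hq0⟩, rmid, ⟨(p1, q1), hE, hp1, hq1⟩, hrun⟩
  · rintro ⟨w, hacc, hL, hR⟩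
    rw [mem_accepts_run] at hacc
    obtain ⟨r0, ⟨hp0, hq0⟩, r, ⟨r', hE, hp1, hq1⟩, hrun⟩ := hacc
    obtain ⟨w1, w2, h1, h2, hL1, hM, hR2⟩ := bwd A B hrun
    obtain ⟨e1, e2, he1, he2, heL, heM, heR⟩ := eps_decomp A B hE
    refine ⟨(w1 ++ e1).filterMap Sum.getRight?, ?_, ?_⟩
    · apply (hA s _).2
      refine ⟨w1 ++ e1, ?_, ?_, rfl⟩
      · rw [mem_accepts_run]
        exact ⟨r0.1, hp0, r'.1, hp1, h1.append he1⟩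
      · simp [List.filterMap_append, hL1, heL, hL]
    · apply (hB _ u).2
      refine ⟨w2 ++ e2, ?_, ?_, ?_⟩
      · rw [mem_accepts_run]
        exact ⟨r0.2, hq0, r'.2, hq1, h2.append he2⟩
      · simp [List.filterMap_append, hM, heM]
      · simp [List.filterMap_append, hR2, heR, hR]

end Comp

end Stmt13

/-- If `R ⊆ Ξ* × Θ*` and `S ⊆ Θ* × Υ*` are recognised by NFAs with finitely many
states, then so is the composite relation
`R ; S = {(s, u) | ∃ t, R s t ∧ S t u}` over `Ξ ⊕ Υ`. -/
theorem stmt13 {Ξ Θ Υ : Type} [Fintype Ξ] [Fintype Θ] [Fintype Υ]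
    (R : List Ξ → List Θ → Prop) (S : List Θ → List Υ → Prop)
    (hR : ∃ (n : ℕ) (A : NFA (Ξ ⊕ Θ) (Fin n)), Recognises A R)
    (hS : ∃ (n : ℕ) (A : NFA (Θ ⊕ Υ) (Fin n)), Recognises A S) :
    ∃ (n : ℕ) (A : NFA (Ξ ⊕ Υ) (Fin n)),
      Recognises A (fun s u => ∃ t : List Θ, R s t ∧ S t u) := by
  obtain ⟨n, A, hA⟩ := hR
  obtain ⟨m, B, hB⟩ := hS
  obtain ⟨k, C, hC⟩ := Stmt13.exists_nfa_fin (Stmt13.Comp A B)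
  refine ⟨k, C, ?_⟩
  intro s u
  rw [show C.accepts = (Stmt13.Comp A B).accepts from hC]
  exact Stmt13.comp_recognises A B hA hB s u
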